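/- For every integer k ≥ 1 and all integers i, j ≥ 0 with i + j + 1 ≤ k, each of the three squared distances ‖𝒜_{i+1,j} − 𝒜_{i,j}‖², ‖𝒜_{i,j+1} − 𝒜_{i,j}‖², and ‖𝒜_{i+1,j} − 𝒜_{i,j+1}‖² is at least (2/k²)·(2 − (k+1)²/k²). -/

import Mathlib

open Real

noncomputable section

/-- Euclidean space `ℝ³`. -/
abbrev E3 := EuclideanSpace ℝ (Fin 3)

/-- Constructor for points of `ℝ³` from coordinates. -/
def pt3 (a b c : ℝ) : E3 := (EuclideanSpace.equiv (Fin 3) ℝ).symm ![a, b, c]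

/-- The lattice point `𝒜_{i,j}` of the equal area octahedral configuration on the
positive-octant face, for parameter `k`: with `t = (i+j)/k`,
`𝒜_{i,j} = (t√(2−t²)·cos(πj/(2(i+j))), t√(2−t²)·sin(πj/(2(i+j))), 1−t²)` when
`i + j > 0`, and `𝒜_{0,0} = (0,0,1)`. -/
def octA (k i j : ℕ) : E3 :=
  if i + j = 0 then pt3 0 0 1
  else
    pt3 (((i : ℝ) + j) / k * Real.sqrt (2 - (((i : ℝ) + j) / k) ^ 2) *
          Real.cos (π * j / (2 * ((i : ℝ) + j))))
        (((i : ℝ) + j) / k * Real.sqrt (2 - (((i : ℝ) + j) / k) ^ 2) *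
          Real.sin (π * j / (2 * ((i : ℝ) + j))))
        (1 - (((i : ℝ) + j) / k) ^ 2)

lemma norm_sq_sub_pt3 (a b c a' b' c' : ℝ) :
    ‖pt3 a b c - pt3 a' b' c'‖ ^ 2 = (a - a') ^ 2 + (b - b') ^ 2 + (c - c') ^ 2 := by
  have h : pt3 a b c - pt3 a' b' c' = pt3 (a - a') (b - b') (c - c') := by
    ext i
    fin_cases i <;> simp [pt3]
  rw [h, EuclideanSpace.norm_eq, Real.sq_sqrt (by positivity)]
  simp [pt3, Fin.sum_univ_three, sq_abs]

lemma octA_eq (k i j : ℕ) :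
    octA k i j =
      pt3 (((i : ℝ) + j) / k * Real.sqrt (2 - (((i : ℝ) + j) / k) ^ 2) *
            Real.cos (π * j / (2 * ((i : ℝ) + j))))
          (((i : ℝ) + j) / k * Real.sqrt (2 - (((i : ℝ) + j) / k) ^ 2) *
            Real.sin (π * j / (2 * ((i : ℝ) + j))))
          (1 - (((i : ℝ) + j) / k) ^ 2) := by
  unfold octA
  split_ifs with h
  · obtain ⟨hi, hj⟩ := Nat.add_eq_zero.mp h
    subst hi; subst hj
    norm_num
  · rfl

lemma radial_step (t s h u v : ℝ) (ht : 0 ≤ t) (hs : s ≤ 1) (hh : 0 < h)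
    (hts : s = t + h) (hu : u = Real.sqrt (2 - t ^ 2)) (hv : v = Real.sqrt (2 - s ^ 2)) :
    2 * h ^ 2 * (2 - (1 + h) ^ 2) ≤ (s * v - t * u) ^ 2 + (s ^ 2 - t ^ 2) ^ 2 := by
  have hs0 : 0 ≤ s := by linarith
  have ht1 : t ≤ 1 := by linarith
  have hs2 : s ^ 2 ≤ 1 := by nlinarith
  have hu2 : u ^ 2 = 2 - t ^ 2 := by rw [hu, Real.sq_sqrt (by nlinarith)]
  have hv2 : v ^ 2 = 2 - s ^ 2 := by rw [hv, Real.sq_sqrt (by nlinarith)]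
  have hu0 : 0 ≤ u := hu ▸ Real.sqrt_nonneg _
  have hv1 : 1 ≤ v := by
    rw [hv, show (1:ℝ) = Real.sqrt 1 by simp]
    exact Real.sqrt_le_sqrt (by nlinarith)
  have hpos : 0 ≤ 2 * h * (1 - s ^ 2) := by nlinarith
  have step1 : 2 * h * (1 - s ^ 2) ≤ (s * v - t * u) * v := by
    nlinarith [mul_nonneg ht (sq_nonneg (u - v)),
      mul_nonneg (sq_nonneg (s - t)) (by linarith : (0:ℝ) ≤ 2 * s + t)]
  have step3 : (2 * h * (1 - s ^ 2)) ^ 2 ≤ ((s * v - t * u) * v) ^ 2 :=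
    pow_le_pow_left₀ hpos step1 2
  have step4 : 2 * h ^ 2 * (1 - s ^ 2) ^ 2 ≤ (s * v - t * u) ^ 2 := by
    nlinarith [step3, hv2, sq_nonneg (s * v - t * u)]
  have ht' : t = s - h := by linarith
  have expand : 2 * h ^ 2 * (1 - s ^ 2) ^ 2 + (s ^ 2 - t ^ 2) ^ 2 - 2 * h ^ 2 * (2 - (1 + h) ^ 2)
      = h ^ 2 * (2 * s ^ 4 + 4 * h * (1 - s) + 3 * h ^ 2) := by
    rw [ht']; ring
  have hnn : 0 ≤ 2 * s ^ 4 + 4 * h * (1 - s) + 3 * h ^ 2 := by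
    nlinarith [mul_nonneg hh.le (by linarith : (0:ℝ) ≤ 1 - s), sq_nonneg (s ^ 2), sq_nonneg h]
  nlinarith [step4, expand, mul_nonneg (sq_nonneg h) hnn]

lemma ang_step (r r' θ θ' : ℝ) (h : 0 ≤ r) (h' : 0 ≤ r') :
    (r' - r) ^ 2 ≤ (r' * Real.cos θ' - r * Real.cos θ) ^ 2 +
      (r' * Real.sin θ' - r * Real.sin θ) ^ 2 := by
  have key : (r' * Real.cos θ' - r * Real.cos θ) ^ 2 + (r' * Real.sin θ' - r * Real.sin θ) ^ 2
      - (r' - r) ^ 2 = 2 * (r * r') * (1 - Real.cos (θ' - θ)) := by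
    rw [Real.cos_sub]
    linear_combination (r' ^ 2) * (Real.sin_sq_add_cos_sq θ') + (r ^ 2) * (Real.sin_sq_add_cos_sq θ)
  have h4 : 0 ≤ 1 - Real.cos (θ' - θ) := by linarith [Real.cos_le_one (θ' - θ)]
  nlinarith [mul_nonneg (mul_nonneg h h') h4]

/-- Combined bound for the two "radial" neighbors. -/
lemma neighbor_bound (t s h u v θ θ' : ℝ) (ht : 0 ≤ t) (hs : s ≤ 1) (hh : 0 < h)
    (hts : s = t + h) (hu : u = Real.sqrt (2 - t ^ 2)) (hv : v = Real.sqrt (2 - s ^ 2)) :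
    2 * h ^ 2 * (2 - (1 + h) ^ 2) ≤
      (s * v * Real.cos θ' - t * u * Real.cos θ) ^ 2 +
      (s * v * Real.sin θ' - t * u * Real.sin θ) ^ 2 +
      ((1 - s ^ 2) - (1 - t ^ 2)) ^ 2 := by
  have hs0 : 0 ≤ s := by linarith
  have hu0 : 0 ≤ u := hu ▸ Real.sqrt_nonneg _
  have hv0 : 0 ≤ v := hv ▸ Real.sqrt_nonneg _
  have h1 := radial_step t s h u v ht hs hh hts hu hv
  have h2 := ang_step (t * u) (s * v) θ θ' (mul_nonneg ht hu0) (mul_nonneg hs0 hv0)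
  have h3 : ((1 - s ^ 2) - (1 - t ^ 2)) ^ 2 = (s ^ 2 - t ^ 2) ^ 2 := by ring
  linarith

lemma cos_pi_div_two_m (m : ℕ) (hm : 1 ≤ m) :
    Real.cos (π / (2 * m)) ≤ 1 - 1 / (m : ℝ) ^ 2 := by
  rcases eq_or_lt_of_le hm with h1 | h2
  · rw [← h1]
    norm_num
  · have hm2 : (2 : ℝ) ≤ (m : ℝ) := by exact_mod_cast h2
    set x := π / (2 * (m : ℝ)) with hx
    have hpi1 := Real.pi_gt_d6
    have hpi2 := Real.pi_lt_d2
    have hmpos : (0:ℝ) < (m:ℝ) := by linarith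
    have hx0 : 0 < x := by positivity
    have hxval : x * (m : ℝ) = π / 2 := by
      rw [hx]; field_simp
    have hx79 : x ≤ 0.7875 := by
      rw [hx, div_le_iff₀ (by positivity)]
      nlinarith
    have hx1 : x ≤ 1 := by linarith
    have hb := Real.cos_bound (x := x) (by rw [abs_of_pos hx0]; exact hx1)
    rw [abs_of_pos hx0] at hb
    have hcos : Real.cos x ≤ 1 - x ^ 2 / 2 + x ^ 4 * (5 / 96) := by
      linarith [(abs_le.mp hb).2]
    have hxm : x ^ 2 * (m:ℝ) ^ 2 = π ^ 2 / 4 := by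
      calc x ^ 2 * (m:ℝ) ^ 2 = (x * m) ^ 2 := by ring
        _ = (π / 2) ^ 2 := by rw [hxval]
        _ = π ^ 2 / 4 := by ring
    have hx4 : x ^ 4 * (m:ℝ) ^ 2 = x ^ 2 * (π ^ 2 / 4) := by
      calc x ^ 4 * (m:ℝ) ^ 2 = x ^ 2 * (x ^ 2 * (m:ℝ) ^ 2) := by ring
        _ = x ^ 2 * (π ^ 2 / 4) := by rw [hxm]
    have hx2b : x ^ 2 ≤ 0.62016 := by nlinarith
    have hp2l : (9.869:ℝ) ≤ π ^ 2 := by nlinarith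
    have hp2u : π ^ 2 ≤ (9.9225:ℝ) := by nlinarith
    have key : 1 / (m:ℝ) ^ 2 ≤ x ^ 2 / 2 - x ^ 4 * (5 / 96) := by
      rw [div_le_iff₀ (by positivity)]
      nlinarith [hxm, hx4, hx2b, hp2l, hp2u]
    linarith

lemma polar_iden (r θ₁ θ₂ : ℝ) :
    (r * Real.cos θ₁ - r * Real.cos θ₂) ^ 2 + (r * Real.sin θ₁ - r * Real.sin θ₂) ^ 2
      = r ^ 2 * (2 - 2 * Real.cos (θ₁ - θ₂)) := by
  rw [Real.cos_sub]
  linear_combination (r ^ 2) * (Real.sin_sq_add_cos_sq θ₁) + (r ^ 2) * (Real.sin_sq_add_cos_sq θ₂)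

lemma rhs_le (k : ℕ) (hk0 : (0:ℝ) < k) :
    2 * (1 / (k:ℝ)) ^ 2 * (2 - (1 + 1 / (k:ℝ)) ^ 2) ≤ 2 / (k:ℝ) ^ 2 := by
  have hk1 : 0 < 1 / (k:ℝ) := by positivity
  have e2 : 2 / (k:ℝ) ^ 2 = 2 * (1 / (k:ℝ)) ^ 2 := by
    field_simp
  rw [e2]
  have hb1 : 1 ≤ (1 + 1/(k:ℝ))^2 := by nlinarith
  nlinarith [mul_nonneg (sq_nonneg (1/(k:ℝ))) (by linarith : (0:ℝ) ≤ (1+1/(k:ℝ))^2 - 1)]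

/-- Bound for the diagonal neighbor. -/
lemma diag_bound (m k : ℕ) (r v θ₁ θ₂ : ℝ) (hm : 1 ≤ m) (hmk : m ≤ k)
    (hv : v = Real.sqrt (2 - ((m : ℝ) / k) ^ 2)) (hr : r = (m : ℝ) / k * v)
    (hθ : θ₂ - θ₁ = π / (2 * (m : ℝ))) :
    2 * (1 / (k:ℝ)) ^ 2 * (2 - (1 + 1 / (k:ℝ)) ^ 2) ≤
      (r * Real.cos θ₁ - r * Real.cos θ₂) ^ 2 + (r * Real.sin θ₁ - r * Real.sin θ₂) ^ 2 := by
  have hm0 : (0:ℝ) < m := by exact_mod_cast hm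
  have hk0 : (0:ℝ) < k := by
    have : 1 ≤ k := le_trans hm hmk
    exact_mod_cast this
  have hs1 : (m:ℝ) / k ≤ 1 := by
    rw [div_le_one hk0]; exact_mod_cast hmk
  have hs0 : 0 ≤ (m:ℝ) / k := by positivity
  have hv2 : v ^ 2 = 2 - ((m:ℝ) / k) ^ 2 := by
    rw [hv, Real.sq_sqrt (by nlinarith [hs0, hs1])]
  have hv1 : 1 ≤ v ^ 2 := by nlinarith [hs0, hs1, hv2]
  -- distance squared as r^2 (2 - 2 cos Δ)
  have hiden := polar_iden r θ₁ θ₂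
  have hΔ : Real.cos (θ₁ - θ₂) = Real.cos (π / (2 * (m:ℝ))) := by
    rw [show θ₁ - θ₂ = -(π / (2 * (m:ℝ))) by linarith, Real.cos_neg]
  have hcos := cos_pi_div_two_m m hm
  have hc2 : 2 / (m:ℝ) ^ 2 ≤ 2 - 2 * Real.cos (θ₁ - θ₂) := by
    rw [hΔ]
    have e : 2 / (m:ℝ) ^ 2 = 2 * (1 / (m:ℝ) ^ 2) := by ring
    rw [e]; linarith
  have hr2 : (m:ℝ) ^ 2 / (k:ℝ) ^ 2 ≤ r ^ 2 := by
    rw [hr]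
    have e : ((m:ℝ) / k * v) ^ 2 = (m:ℝ) ^ 2 / (k:ℝ) ^ 2 * v ^ 2 := by ring
    rw [e]
    nlinarith [sq_nonneg ((m:ℝ) / k), hv1]
  have hprod : (m:ℝ) ^ 2 / (k:ℝ) ^ 2 * (2 / (m:ℝ) ^ 2) ≤ r ^ 2 * (2 - 2 * Real.cos (θ₁ - θ₂)) := by
    apply mul_le_mul hr2 hc2 (by positivity) (sq_nonneg r)
  have heq : (m:ℝ) ^ 2 / (k:ℝ) ^ 2 * (2 / (m:ℝ) ^ 2) = 2 / (k:ℝ) ^ 2 := by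
    field_simp
  have hfinal := rhs_le k hk0
  have h5 : 2 / (k:ℝ) ^ 2 ≤ r ^ 2 * (2 - 2 * Real.cos (θ₁ - θ₂)) := by
    rw [← heq]; exact hprod
  rw [hiden]
  linarith

/-- Nearest-neighbor separation of the equal area octahedral lattice: for `k ≥ 1` and
`i, j ≥ 0` with `i + j + 1 ≤ k`, each of the three squared nearest-neighbor distances
is at least `(2/k²)·(2 − (k+1)²/k²)`. -/
theorem octahedral_neighbor_separation (k i j : ℕ) (hk : 1 ≤ k)
    (hij : i + j + 1 ≤ k) :
    (2 / (k : ℝ) ^ 2) * (2 - ((k : ℝ) + 1) ^ 2 / (k : ℝ) ^ 2) ≤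
        ‖octA k (i + 1) j - octA k i j‖ ^ 2 ∧
    (2 / (k : ℝ) ^ 2) * (2 - ((k : ℝ) + 1) ^ 2 / (k : ℝ) ^ 2) ≤
        ‖octA k i (j + 1) - octA k i j‖ ^ 2 ∧
    (2 / (k : ℝ) ^ 2) * (2 - ((k : ℝ) + 1) ^ 2 / (k : ℝ) ^ 2) ≤
        ‖octA k (i + 1) j - octA k i (j + 1)‖ ^ 2 := by
  have hk0 : (0:ℝ) < k := by exact_mod_cast hk
  have hrhs : (2 / (k : ℝ) ^ 2) * (2 - ((k : ℝ) + 1) ^ 2 / (k : ℝ) ^ 2)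
      = 2 * (1 / (k:ℝ)) ^ 2 * (2 - (1 + 1 / (k:ℝ)) ^ 2) := by
    field_simp
  have hijk : ((i:ℝ) + j + 1) ≤ (k:ℝ) := by exact_mod_cast hij
  refine ⟨?_, ?_, ?_⟩
  · -- case (i+1, j) vs (i, j)
    rw [octA_eq, octA_eq, norm_sq_sub_pt3, hrhs]
    push_cast
    exact neighbor_bound (((i:ℝ) + j) / k) (((i:ℝ) + 1 + j) / k) (1 / k)
      (Real.sqrt (2 - (((i:ℝ) + j) / k) ^ 2)) (Real.sqrt (2 - (((i:ℝ) + 1 + j) / k) ^ 2))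
      (π * j / (2 * ((i:ℝ) + j))) (π * j / (2 * ((i:ℝ) + 1 + j)))
      (by positivity) (by rw [div_le_one hk0]; linarith)
      (by positivity) (by field_simp; ring) rfl rfl
  · -- case (i, j+1) vs (i, j)
    rw [octA_eq, octA_eq, norm_sq_sub_pt3, hrhs]
    push_cast
    exact neighbor_bound (((i:ℝ) + j) / k) (((i:ℝ) + (j + 1)) / k) (1 / k)
      (Real.sqrt (2 - (((i:ℝ) + j) / k) ^ 2)) (Real.sqrt (2 - (((i:ℝ) + (j + 1)) / k) ^ 2))
      (π * j / (2 * ((i:ℝ) + j))) (π * (j + 1) / (2 * ((i:ℝ) + (j + 1))))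
      (by positivity) (by rw [div_le_one hk0]; linarith)
      (by positivity) (by field_simp; ring) rfl rfl
  · -- diagonal case (i+1, j) vs (i, j+1)
    rw [octA_eq, octA_eq, norm_sq_sub_pt3, hrhs]
    push_cast
    have e : (i:ℝ) + (j + 1) = (i:ℝ) + 1 + j := by ring
    rw [e]
    have hm1 : 1 ≤ i + j + 1 := by omega
    have hmc : ((i + j + 1 : ℕ) : ℝ) = (i:ℝ) + 1 + j := by push_cast; ring
    have hθ : π * ((j:ℝ) + 1) / (2 * ((i:ℝ) + 1 + j)) - π * j / (2 * ((i:ℝ) + 1 + j))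
        = π / (2 * ((i + j + 1 : ℕ) : ℝ)) := by
      rw [hmc]
      have hne : (i:ℝ) + 1 + j ≠ 0 := by positivity
      field_simp
      ring
    have hb := diag_bound (i + j + 1) k
      (((i:ℝ) + 1 + j) / k * Real.sqrt (2 - (((i:ℝ) + 1 + j) / k) ^ 2))
      (Real.sqrt (2 - (((i:ℝ) + 1 + j) / k) ^ 2))
      (π * j / (2 * ((i:ℝ) + 1 + j))) (π * ((j:ℝ) + 1) / (2 * ((i:ℝ) + 1 + j)))
      hm1 hij (by rw [hmc]) (by rw [hmc]) hθ
    refine le_trans hb ?_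
    have h6 := sq_nonneg ((1 - (((i:ℝ) + 1 + j) / k) ^ 2) - (1 - (((i:ℝ) + 1 + j) / k) ^ 2))
    linarith
end
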